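/- Let k be a field and let P₁, P₂ be 3×4 matrices over k, each of rank 3, such that the kernels of the induced linear maps k⁴ → k³ are distinct subspaces of k⁴. Then there exists a nonzero 3×3 matrix A over k such that for every vector ξ ∈ k⁴ one has (P₁ *ᵥ ξ) ⬝ᵥ (A *ᵥ (P₂ *ᵥ ξ)) = 0. -/

import Mathlib

open Matrix

lemma cross_ne_zero_aux {k : Type*} [Field k] {e : Fin 3 → k} (he : e ≠ 0) :
    ∃ x : Fin 3 → k, e ⨯₃ x ≠ 0 := by
  have : ∃ i, e i ≠ 0 := by
    by_contra h
    push_neg at h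
    exact he (funext h)
  obtain ⟨i, hi⟩ := this
  fin_cases i
  · exact ⟨![0,1,0], fun h => hi (by simpa [cross_apply] using congrFun h 2)⟩
  · exact ⟨![0,0,1], fun h => hi (by simpa [cross_apply] using congrFun h 0)⟩
  · exact ⟨![1,0,0], fun h => hi (by simpa [cross_apply] using congrFun h 1)⟩

/-- Two cameras with distinct centers admit a fundamental matrix:
a nonzero 3×3 bilinear form vanishing on all point correspondences. -/
theorem fundamental_matrix_exists {k : Type*} [Field k]
    (P₁ P₂ : Matrix (Fin 3) (Fin 4) k)
    (hP₁ : P₁.rank = 3) (hP₂ : P₂.rank = 3)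
    (hker : LinearMap.ker P₁.mulVecLin ≠ LinearMap.ker P₂.mulVecLin) :
    ∃ A : Matrix (Fin 3) (Fin 3) k, A ≠ 0 ∧
      ∀ ξ : Fin 4 → k, (P₁ *ᵥ ξ) ⬝ᵥ (A *ᵥ (P₂ *ᵥ ξ)) = 0 := by
  classical
  -- ranks of kernels
  have hrn₁ : Module.finrank k (LinearMap.ker P₁.mulVecLin) = 1 := by
    have := LinearMap.finrank_range_add_finrank_ker P₁.mulVecLin
    rw [show Module.finrank k (LinearMap.range P₁.mulVecLin) = 3 from hP₁] at this
    simp only [Module.finrank_pi, Fintype.card_fin] at this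
    omega
  have hrn₂ : Module.finrank k (LinearMap.ker P₂.mulVecLin) = 1 := by
    have := LinearMap.finrank_range_add_finrank_ker P₂.mulVecLin
    rw [show Module.finrank k (LinearMap.range P₂.mulVecLin) = 3 from hP₂] at this
    simp only [Module.finrank_pi, Fintype.card_fin] at this
    omega
  -- a nonzero element of ker P₂
  obtain ⟨c, hc_mem, hc0⟩ : ∃ c, c ∈ LinearMap.ker P₂.mulVecLin ∧ c ≠ 0 := by
    by_contra h
    push_neg at h
    have : LinearMap.ker P₂.mulVecLin = ⊥ := by
      ext x; simp only [Submodule.mem_bot]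
      constructor
      · intro hx; by_contra hx0; exact hx0 (h x hx)
      · intro hx; simp [hx]
    rw [this] at hrn₂; simp at hrn₂
  have hker₂ : LinearMap.ker P₂.mulVecLin = Submodule.span k {c} := by
    refine (Submodule.eq_of_le_of_finrank_le
      ((Submodule.span_singleton_le_iff_mem _ _).2 hc_mem) ?_).symm
    rw [hrn₂, finrank_span_singleton hc0]
  -- c is not in ker P₁
  have hc_not : c ∉ LinearMap.ker P₁.mulVecLin := by
    intro hmem
    apply hker
    have hker₁ : LinearMap.ker P₁.mulVecLin = Submodule.span k {c} := by
      refine (Submodule.eq_of_le_of_finrank_le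
        ((Submodule.span_singleton_le_iff_mem _ _).2 hmem) ?_).symm
      rw [hrn₁, finrank_span_singleton hc0]
    rw [hker₁, hker₂]
  set e : Fin 3 → k := P₁ *ᵥ c with he_def
  have he : e ≠ 0 := by simpa [LinearMap.mem_ker, mulVecLin_apply] using hc_not
  -- P₂ surjective, get right inverse g
  have hsurj : LinearMap.range P₂.mulVecLin = ⊤ := by
    apply Submodule.eq_top_of_finrank_eq
    rw [show Module.finrank k (LinearMap.range P₂.mulVecLin) = 3 from hP₂]
    simp [Module.finrank_pi]
  obtain ⟨g, hg⟩ := P₂.mulVecLin.exists_rightInverse_of_surjective hsurj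
  have hg' : ∀ w, P₂ *ᵥ (g w) = w := fun w => by
    have := congrFun (congrArg DFunLike.coe hg) w
    simpa [mulVecLin_apply] using this
  -- the fundamental matrix
  set M : (Fin 3 → k) →ₗ[k] (Fin 3 → k) :=
    (crossProduct e) ∘ₗ P₁.mulVecLin ∘ₗ g with hM
  refine ⟨LinearMap.toMatrix' M, ?_, ?_⟩
  · -- A ≠ 0
    intro hA0
    have hM0 : M = 0 := by
      have := congrArg Matrix.toLin' hA0
      rw [Matrix.toLin'_toMatrix'] at this
      simpa using this
    -- then every P₁ *ᵥ ξ is killed by crossProduct e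
    have hrange : LinearMap.range P₁.mulVecLin ≤ LinearMap.ker (crossProduct e) := by
      rintro x ⟨ξ, rfl⟩
      have hd : ξ - g (P₂ *ᵥ ξ) ∈ LinearMap.ker P₂.mulVecLin := by
        simp [LinearMap.mem_ker, mulVecLin_apply, mulVec_sub, hg']
      rw [hker₂, Submodule.mem_span_singleton] at hd
      obtain ⟨t, ht⟩ := hd
      have hξ : ξ = g (P₂ *ᵥ ξ) + t • c := by
        rw [ht]; abel
      have hMz : crossProduct e (P₁ *ᵥ (g (P₂ *ᵥ ξ))) = 0 := by
        have := congrFun (congrArg DFunLike.coe hM0) (P₂ *ᵥ ξ)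
        simpa [hM, mulVecLin_apply] using this
      simp only [LinearMap.mem_ker, mulVecLin_apply]
      rw [hξ, mulVec_add, map_add, hMz, zero_add, mulVec_smul, ← he_def,
        LinearMap.map_smul, cross_self, smul_zero]
    -- but crossProduct e has nontrivial range, so kernel has finrank ≤ 2
    obtain ⟨x, hx⟩ := cross_ne_zero_aux he
    have hcr_ne : crossProduct e ≠ 0 := by
      intro h0
      exact hx (by simp [show crossProduct e = 0 from h0])
    have hker_lt : Module.finrank k (LinearMap.ker (crossProduct e)) ≤ 2 := by
      have hrn := LinearMap.finrank_range_add_finrank_ker (crossProduct e)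
      have hpos : 1 ≤ Module.finrank k (LinearMap.range (crossProduct e)) := by
        rw [Nat.one_le_iff_ne_zero]
        intro h0
        apply hcr_ne
        have : LinearMap.range (crossProduct e) = ⊥ :=
          Submodule.finrank_eq_zero.mp h0
        exact LinearMap.range_eq_bot.mp this
      have hdom : Module.finrank k (Fin 3 → k) = 3 := by simp
      omega
    have := Submodule.finrank_mono hrange
    rw [show Module.finrank k (LinearMap.range P₁.mulVecLin) = 3 from hP₁] at this
    omega
  · -- vanishing
    intro ξ
    have hd : ξ - g (P₂ *ᵥ ξ) ∈ LinearMap.ker P₂.mulVecLin := by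
      simp [LinearMap.mem_ker, mulVecLin_apply, mulVec_sub, hg']
    rw [hker₂, Submodule.mem_span_singleton] at hd
    obtain ⟨t, ht⟩ := hd
    have hξ : ξ = g (P₂ *ᵥ ξ) + t • c := by rw [ht]; abel
    set v : Fin 3 → k := P₁ *ᵥ (g (P₂ *ᵥ ξ)) with hv
    have hAv : (LinearMap.toMatrix' M) *ᵥ (P₂ *ᵥ ξ) = e ⨯₃ v := by
      calc (LinearMap.toMatrix' M) *ᵥ (P₂ *ᵥ ξ) = M (P₂ *ᵥ ξ) := by
            rw [← Matrix.toLin'_apply, Matrix.toLin'_toMatrix']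
        _ = e ⨯₃ v := by simp [hM, mulVecLin_apply, hv]
    have hP₁ξ : P₁ *ᵥ ξ = v + t • e := by
      rw [hξ, mulVec_add, mulVec_smul, ← he_def, hv]
    rw [hAv, hP₁ξ, add_dotProduct, smul_dotProduct, dot_cross_self,
      dot_self_cross, smul_zero, add_zero]
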